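/- Assume that for each j = 1,…,m either exactly one of a_{j0},…,a_{jm} is strictly positive, or all of a_{j0},…,a_{jm} are nonnegative, and that for each i = 1,…,n exactly one of (h₀)_{d,i},…,(h_m)_{d,i} is strictly negative. Then for every feasible point (z, w, μ) of program (lw2), setting λ_j := ∑_{k=0}^m a_{jk} μ_k for j = 1,…,m, one has λ = (λ₁,…,λ_m) ∈ [0,∞)^m and −h₀(0) − t(z,w,μ) ≤ G(λ)_gp. Consequently f^A_{gp,g} ≤ s(f,g) (as elements of ℝ ∪ {±∞}). -/
import Mathlib


open MvPolynomial Finset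

noncomputable section

/-- `Finset.filter` with classical decidability. -/
def pfilter {β : Type*} (s : Finset β) (q : β → Prop) : Finset β :=
  @Finset.filter β q (fun _ => Classical.propDecidable _) s

/-- `|α| := α₁ + ⋯ + αₙ` for a multi-index `α`. -/
def adeg {n : ℕ} (α : Fin n →₀ ℕ) : ℕ := ∑ i, α i

/-- `Ω(p) := {α : |α| ≤ d, p_α ≠ 0, α ∉ {0, ε₁, …, εₙ}}`. -/
def OmegaSet {n : ℕ} (d : ℕ) (p : MvPolynomial (Fin n) ℝ) : Finset (Fin n →₀ ℕ) :=
  pfilter p.support (fun α => adeg α ≤ d ∧ α ≠ 0 ∧ ∀ i, α ≠ Finsupp.single i d)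

/-- `Δ(p) := {α ∈ Ω(p) : p_α x^α is not a square}`. -/
def DelSet {n : ℕ} (d : ℕ) (p : MvPolynomial (Fin n) ℝ) : Finset (Fin n →₀ ℕ) :=
  pfilter (OmegaSet d p)
    (fun α => ¬ IsSquare ((monomial α (p.coeff α)) : MvPolynomial (Fin n) ℝ))

/-- Feasibility for program (lw) for `p`. -/
def LwFeas {n : ℕ} (d : ℕ) (p : MvPolynomial (Fin n) ℝ)
    (z : (Fin n →₀ ℕ) → Fin n → ℝ) : Prop :=
  (∀ α ∈ DelSet d p, ∀ i, 0 ≤ z α i ∧ (z α i = 0 ↔ α i = 0)) ∧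
  (∀ i, ∑ α ∈ DelSet d p, z α i ≤ p.coeff (Finsupp.single i d)) ∧
  (∀ α ∈ DelSet d p, adeg α = d →
    ∏ i, (z α i / (α i : ℝ)) ^ (α i) = (p.coeff α / (d : ℝ)) ^ d)

/-- The objective function `v` of program (lw). -/
def lwObj {n : ℕ} (d : ℕ) (p : MvPolynomial (Fin n) ℝ)
    (z : (Fin n →₀ ℕ) → Fin n → ℝ) : ℝ :=
  ∑ α ∈ pfilter (DelSet d p) (fun α => adeg α < d),
    ((d : ℝ) - (adeg α : ℝ)) *
      (((p.coeff α / (d : ℝ)) ^ d * ∏ i, ((α i : ℝ) / z α i) ^ (α i)) ^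
        ((1 : ℝ) / ((d : ℝ) - (adeg α : ℝ))))

/-- `ρ(p) ∈ [0,∞]`, the infimum of `v` over the feasible set (`⊤` if infeasible). -/
def lwRho {n : ℕ} (d : ℕ) (p : MvPolynomial (Fin n) ℝ) : EReal :=
  sInf ((fun z => ((lwObj d p z : ℝ) : EReal)) '' {z | LwFeas d p z})

/-- `p_gp := p(0) − ρ(p) ∈ ℝ ∪ {−∞}`. -/
def lwGp {n : ℕ} (d : ℕ) (p : MvPolynomial (Fin n) ℝ) : EReal :=
  ((eval (0 : Fin n → ℝ) p : ℝ) : EReal) - lwRho d p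

/-- `G(λ) := f − ∑ⱼ λⱼ gⱼ`. -/
def polyG {n m : ℕ} (f : MvPolynomial (Fin n) ℝ) (g : Fin m → MvPolynomial (Fin n) ℝ)
    (lam : Fin m → ℝ) : MvPolynomial (Fin n) ℝ :=
  f - ∑ j, C (lam j) * g j

/-- `s(f,g) := sup{G(λ)_gp : λ ∈ [0,∞)^m}`. -/
def sBound {n m : ℕ} (d : ℕ) (f : MvPolynomial (Fin n) ℝ)
    (g : Fin m → MvPolynomial (Fin n) ℝ) : EReal :=
  sSup ((fun lam => lwGp d (polyG f g lam)) '' {lam : Fin m → ℝ | ∀ j, 0 ≤ lam j})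


/-- `h_k := ∑_{j=0}^m a_{jk} g_j` for `gext = (g₀, g₁, …, g_m)` with `g₀ = −f`. -/
def hpoly {n m : ℕ} (gext : Fin (m+1) → MvPolynomial (Fin n) ℝ)
    (A : Fin (m+1) → Fin (m+1) → ℝ) (k : Fin (m+1)) : MvPolynomial (Fin n) ℝ :=
  ∑ j, C (A j k) * gext j

/-- `μ` extended by `μ₀ := 1`. -/
def muExt {m : ℕ} (mu : Fin m → ℝ) : Fin (m+1) → ℝ := Fin.cons 1 mu

/-- `H(μ) := −∑_{k=0}^m μ_k h_k`. -/
def Hpoly {n m : ℕ} (gext : Fin (m+1) → MvPolynomial (Fin n) ℝ)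
    (A : Fin (m+1) → Fin (m+1) → ℝ) (mu : Fin m → ℝ) : MvPolynomial (Fin n) ℝ :=
  - ∑ k, C (muExt mu k) * hpoly gext A k

/-- `H(μ)_α^+ := −∑_{j : (h_j)_α < 0} (h_j)_α μ_j`. -/
def Hplus {n m : ℕ} (gext : Fin (m+1) → MvPolynomial (Fin n) ℝ)
    (A : Fin (m+1) → Fin (m+1) → ℝ) (mu : Fin m → ℝ) (α : Fin n →₀ ℕ) : ℝ :=
  ∑ j, if (hpoly gext A j).coeff α < 0 then -((hpoly gext A j).coeff α * muExt mu j) else 0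

/-- `H(μ)_α^− := ∑_{j : (h_j)_α > 0} (h_j)_α μ_j`. -/
def Hminus {n m : ℕ} (gext : Fin (m+1) → MvPolynomial (Fin n) ℝ)
    (A : Fin (m+1) → Fin (m+1) → ℝ) (mu : Fin m → ℝ) (α : Fin n →₀ ℕ) : ℝ :=
  ∑ j, if 0 < (hpoly gext A j).coeff α then (hpoly gext A j).coeff α * muExt mu j else 0

/-- `Δ := Δ(f) ∪ Δ(−g₁) ∪ ⋯ ∪ Δ(−g_m)` (note `−g₀ = f`). -/
def DelTot2 {n m : ℕ} (d : ℕ) (gext : Fin (m+1) → MvPolynomial (Fin n) ℝ) :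
    Finset (Fin n →₀ ℕ) :=
  Finset.univ.biUnion (fun j : Fin (m+1) => DelSet d (-(gext j)))

/-- Feasibility for program (lw2). -/
def Lw2Feas {n m : ℕ} (d : ℕ) (gext : Fin (m+1) → MvPolynomial (Fin n) ℝ)
    (A : Fin (m+1) → Fin (m+1) → ℝ)
    (z : (Fin n →₀ ℕ) → Fin n → ℝ) (w : (Fin n →₀ ℕ) → ℝ) (mu : Fin m → ℝ) : Prop :=
  (∀ j, 0 < mu j) ∧
  (∀ α ∈ DelTot2 d gext, ∀ i, 0 ≤ z α i ∧ (z α i = 0 ↔ α i = 0)) ∧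
  (∀ α ∈ DelTot2 d gext, 0 < w α) ∧
  (∀ i, ∑ α ∈ DelTot2 d gext, z α i ≤ (Hpoly gext A mu).coeff (Finsupp.single i d)) ∧
  (∀ α ∈ DelTot2 d gext, adeg α = d →
    (w α / (d : ℝ)) ^ d ≤ ∏ i, (z α i / (α i : ℝ)) ^ (α i)) ∧
  (∀ α ∈ DelTot2 d gext, max (Hplus gext A mu α) (Hminus gext A mu α) ≤ w α) ∧
  (∀ j : Fin (m+1), j ≠ 0 → 0 ≤ ∑ k, A j k * muExt mu k)

/-- The objective function `t` of program (lw2). -/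
def lw2Obj {n m : ℕ} (d : ℕ) (gext : Fin (m+1) → MvPolynomial (Fin n) ℝ)
    (A : Fin (m+1) → Fin (m+1) → ℝ)
    (z : (Fin n →₀ ℕ) → Fin n → ℝ) (w : (Fin n →₀ ℕ) → ℝ) (mu : Fin m → ℝ) : ℝ :=
  (∑ j : Fin m, mu j * max (eval (0 : Fin n → ℝ) (hpoly gext A j.succ)) 0) +
  ∑ α ∈ pfilter (DelTot2 d gext) (fun α => adeg α < d),
    ((d : ℝ) - (adeg α : ℝ)) *
      (((w α / (d : ℝ)) ^ d * ∏ i, ((α i : ℝ) / z α i) ^ (α i)) ^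
        ((1 : ℝ) / ((d : ℝ) - (adeg α : ℝ))))

/-- `ρ_A ∈ [0,∞]`, the optimal value of program (lw2) (`⊤` if infeasible). -/
def rhoA {n m : ℕ} (d : ℕ) (gext : Fin (m+1) → MvPolynomial (Fin n) ℝ)
    (A : Fin (m+1) → Fin (m+1) → ℝ) : EReal :=
  sInf ((fun t : ((Fin n →₀ ℕ) → Fin n → ℝ) × ((Fin n →₀ ℕ) → ℝ) × (Fin m → ℝ) =>
      ((lw2Obj d gext A t.1 t.2.1 t.2.2 : ℝ) : EReal)) ''
    {t | Lw2Feas d gext A t.1 t.2.1 t.2.2})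

/-- `f^A_{gp,g} := −h₀(0) − ρ_A ∈ ℝ ∪ {−∞}`. -/
def fAgp {n m : ℕ} (d : ℕ) (gext : Fin (m+1) → MvPolynomial (Fin n) ℝ)
    (A : Fin (m+1) → Fin (m+1) → ℝ) : EReal :=
  ((-(eval (0 : Fin n → ℝ) (hpoly gext A 0)) : ℝ) : EReal) - rhoA d gext A

lemma aux_sub_sInf_le (c : ℝ) (S' : Set ℝ) (B : EReal)
    (h : ∀ x ∈ S', ((c - x : ℝ) : EReal) ≤ B) :
    (c : EReal) - sInf ((fun x : ℝ => (x : EReal)) '' S') ≤ B := by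
  set S'' : Set EReal := (fun x : ℝ => (x : EReal)) '' S' with hS
  by_contra hB
  push_neg at hB
  obtain ⟨y, hBy, hy⟩ := exists_between hB
  have hyb : y ≠ ⊥ := (bot_le.trans_lt hBy).ne'
  have hyt : y ≠ ⊤ := ne_top_of_lt hy
  lift y to ℝ using ⟨hyt, hyb⟩ with y'
  rcases eq_or_ne (sInf S'') ⊤ with hT | hT
  · rw [hT, EReal.sub_top] at hy; exact not_lt_bot hy
  · rw [EReal.lt_sub_iff_add_lt (Or.inr (EReal.coe_ne_top _)) (Or.inl hT)] at hy
    have h2 : sInf S'' < ((c - y' : ℝ) : EReal) := by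
      rw [EReal.coe_sub,
        EReal.lt_sub_iff_add_lt (Or.inl (EReal.coe_ne_bot _)) (Or.inl (EReal.coe_ne_top _))]
      rwa [add_comm]
    obtain ⟨x, hxS, hxlt⟩ := sInf_lt_iff.mp h2
    obtain ⟨x', hx'S, rfl⟩ := hxS
    have : (x' : ℝ) < c - y' := by
      change (x' : EReal) < _ at hxlt
      exact_mod_cast hxlt
    have h3 : (y' : ℝ) < c - x' := by linarith
    have := lt_of_le_of_lt (le_of_lt hBy)
      (lt_of_lt_of_le (by exact_mod_cast h3 : (y' : EReal) < ((c - x' : ℝ) : EReal)) (h x' hx'S))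
    exact lt_irrefl _ this

lemma Hpoly_eq_polyG {n m : ℕ} (f : MvPolynomial (Fin n) ℝ)
    (g : Fin m → MvPolynomial (Fin n) ℝ)
    (gext : Fin (m+1) → MvPolynomial (Fin n) ℝ) (hgext : gext = Fin.cons (-f) g)
    (A : Fin (m+1) → Fin (m+1) → ℝ) (hA00 : A 0 0 = 1) (hA0 : ∀ k, k ≠ 0 → A 0 k = 0)
    (mu : Fin m → ℝ) :
    Hpoly gext A mu = polyG f g (fun j => ∑ k, A j.succ k * muExt mu k) := by
  have step : ∀ j : Fin (m+1),
      ∑ k, C (muExt mu k) * (C (A j k) * gext j) = C (∑ k, A j k * muExt mu k) * gext j := by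
    intro j
    rw [map_sum, Finset.sum_mul]
    refine Finset.sum_congr rfl fun k _ => by rw [map_mul]; ring
  have key : Hpoly gext A mu = - ∑ j, C (∑ k, A j k * muExt mu k) * gext j := by
    unfold Hpoly hpoly
    rw [Finset.sum_congr rfl fun k _ => Finset.mul_sum _ _ _, Finset.sum_comm]
    exact congrArg Neg.neg (Finset.sum_congr rfl fun j _ => step j)
  rw [key, Fin.sum_univ_succ]
  have h0 : (∑ k, A 0 k * muExt mu k) = 1 := by
    rw [Fin.sum_univ_succ, hA00, show muExt mu 0 = 1 from rfl]
    have : ∀ k : Fin m, A 0 k.succ * muExt mu k.succ = 0 := fun k => by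
      rw [hA0 k.succ (Fin.succ_ne_zero k), zero_mul]
    rw [Finset.sum_congr rfl fun k _ => this k]
    simp
  rw [h0, hgext]
  simp only [Fin.cons_zero, Fin.cons_succ, polyG, map_one, one_mul]
  ring

lemma Hpoly_coeff_eq {n m : ℕ} (gext : Fin (m+1) → MvPolynomial (Fin n) ℝ)
    (A : Fin (m+1) → Fin (m+1) → ℝ) (mu : Fin m → ℝ) (α : Fin n →₀ ℕ) :
    (Hpoly gext A mu).coeff α = Hplus gext A mu α - Hminus gext A mu α := by
  unfold Hpoly Hplus Hminus
  rw [coeff_neg, ← Finset.sum_sub_distrib]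
  rw [show MvPolynomial.coeff α (∑ k, C (muExt mu k) * hpoly gext A k)
      = ∑ k, muExt mu k * (hpoly gext A k).coeff α from by
    rw [MvPolynomial.coeff_sum]; exact Finset.sum_congr rfl fun k _ => coeff_C_mul _ _ _]
  rw [← Finset.sum_neg_distrib]
  refine Finset.sum_congr rfl fun k _ => ?_
  rcases lt_trichotomy ((hpoly gext A k).coeff α) 0 with h | h | h
  · rw [if_pos h, if_neg (by linarith)]; ring
  · rw [if_neg (by rw [h]; exact lt_irrefl 0), if_neg (by rw [h]; exact lt_irrefl 0), h]; ring
  · rw [if_neg (by linarith), if_pos h]; ring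
lemma mem_pfilter {β : Type*} {s : Finset β} {q : β → Prop} {a : β} :
    a ∈ pfilter s q ↔ a ∈ s ∧ q a := by
  classical
  unfold pfilter
  rw [Finset.mem_filter]

lemma abs_Hpoly_coeff_le {n m : ℕ} (gext : Fin (m+1) → MvPolynomial (Fin n) ℝ)
    (A : Fin (m+1) → Fin (m+1) → ℝ) (mu : Fin m → ℝ) (hmu : ∀ j, 0 < mu j) (α : Fin n →₀ ℕ) :
    |(Hpoly gext A mu).coeff α| ≤ max (Hplus gext A mu α) (Hminus gext A mu α) := by
  have hmu' : ∀ j : Fin (m+1), 0 ≤ muExt mu j := by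
    intro j
    refine Fin.cases ?_ ?_ j
    · exact zero_le_one
    · exact fun i => by simpa [muExt] using (hmu i).le
  have hp : 0 ≤ Hplus gext A mu α := by
    refine Finset.sum_nonneg fun j _ => ?_
    split_ifs with h
    · have := mul_nonpos_of_nonpos_of_nonneg h.le (hmu' j)
      linarith
    · exact le_refl 0
  have hm : 0 ≤ Hminus gext A mu α := by
    refine Finset.sum_nonneg fun j _ => ?_
    split_ifs with h
    · exact mul_nonneg h.le (hmu' j)
    · exact le_refl 0
  rw [Hpoly_coeff_eq]
  have h1 := le_max_left (Hplus gext A mu α) (Hminus gext A mu α)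
  have h2 := le_max_right (Hplus gext A mu α) (Hminus gext A mu α)
  rw [abs_le]
  constructor <;> linarith

lemma DelSet_polyG_subset {n m : ℕ} (d : ℕ) (f : MvPolynomial (Fin n) ℝ)
    (g : Fin m → MvPolynomial (Fin n) ℝ)
    (gext : Fin (m+1) → MvPolynomial (Fin n) ℝ) (hgext : gext = Fin.cons (-f) g)
    (hO : ∀ j, OmegaSet d (-(gext j)) = DelSet d (-(gext j))) (lam : Fin m → ℝ) :
    DelSet d (polyG f g lam) ⊆ DelTot2 d gext := by
  intro α hα
  obtain ⟨hΩ, -⟩ := mem_pfilter.mp hα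
  obtain ⟨hsup, hcond⟩ := mem_pfilter.mp hΩ
  have hex : ∃ j : Fin (m+1), (-(gext j)).coeff α ≠ 0 := by
    by_contra hall
    push_neg at hall
    apply MvPolynomial.mem_support_iff.mp hsup
    have hf : f.coeff α = 0 := by
      have := hall 0
      rw [hgext] at this
      simpa using this
    have hg : ∀ j : Fin m, (g j).coeff α = 0 := by
      intro j
      have := hall j.succ
      rw [hgext] at this
      simpa using this
    simp [polyG, coeff_sub, MvPolynomial.coeff_sum, coeff_C_mul, hf, hg]
  obtain ⟨j, hj⟩ := hex
  refine Finset.mem_biUnion.mpr ⟨j, Finset.mem_univ j, ?_⟩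
  rw [← hO j]
  exact mem_pfilter.mpr ⟨MvPolynomial.mem_support_iff.mpr hj, hcond⟩
lemma main_core {n m : ℕ} (d : ℕ)
    (f : MvPolynomial (Fin n) ℝ) (g : Fin m → MvPolynomial (Fin n) ℝ)
    (hd2 : 2 ≤ d) (hde : Even d)
    (gext : Fin (m+1) → MvPolynomial (Fin n) ℝ) (hgext : gext = Fin.cons (-f) g)
    (hO : ∀ j, OmegaSet d (-(gext j)) = DelSet d (-(gext j)))
    (A : Fin (m+1) → Fin (m+1) → ℝ) (hA00 : A 0 0 = 1) (hA0 : ∀ k, k ≠ 0 → A 0 k = 0)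
    (z : (Fin n →₀ ℕ) → Fin n → ℝ) (w : (Fin n →₀ ℕ) → ℝ) (mu : Fin m → ℝ)
    (hfeas : Lw2Feas d gext A z w mu) :
    (∀ j : Fin m, 0 ≤ ∑ k, A j.succ k * muExt mu k) ∧
    ((( -(eval (0 : Fin n → ℝ) (hpoly gext A 0)) - lw2Obj d gext A z w mu : ℝ) : EReal) ≤
      lwGp d (polyG f g (fun j => ∑ k, A j.succ k * muExt mu k))) := by
  classical
  obtain ⟨hmu, hz, hw, hsum, hprod, hwmax, hAmu⟩ := hfeas
  set lam : Fin m → ℝ := fun j => ∑ k, A j.succ k * muExt mu k with hlamdef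
  have hlam0 : ∀ j, 0 ≤ lam j := fun j => hAmu j.succ (Fin.succ_ne_zero j)
  refine ⟨hlam0, ?_⟩
  set p : MvPolynomial (Fin n) ℝ := polyG f g lam with hpdef
  have hP : Hpoly gext A mu = p := Hpoly_eq_polyG f g gext hgext A hA00 hA0 mu
  have hd0 : (0:ℝ) < d := by
    have : 0 < d := lt_of_lt_of_le (by norm_num) hd2
    exact_mod_cast this
  have habs : ∀ α ∈ DelTot2 d gext, |p.coeff α| ≤ w α := by
    intro α hα
    rw [← hP]
    exact le_trans (abs_Hpoly_coeff_le gext A mu hmu α) (hwmax α hα)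
  have hsubset : DelSet d p ⊆ DelTot2 d gext :=
    DelSet_polyG_subset d f g gext hgext hO lam
  set Q : (Fin n →₀ ℕ) → ℝ := fun α => ∏ i, (z α i / (α i : ℝ)) ^ (α i) with hQdef
  set T : (Fin n →₀ ℕ) → ℝ := fun α => (p.coeff α / d) ^ d with hTdef
  have hQpos : ∀ α ∈ DelTot2 d gext, 0 < Q α := by
    intro α hα
    refine Finset.prod_pos fun i _ => ?_
    rcases Nat.eq_zero_or_pos (α i) with h0 | h0
    · rw [h0, pow_zero]; norm_num
    · have hzpos : 0 < z α i := by
        rcases (hz α hα i) with ⟨h1, h2⟩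
        rcases lt_or_eq_of_le h1 with h | h
        · exact h
        · exact absurd (h2.mp h.symm) (by omega)
      exact pow_pos (div_pos hzpos (by exact_mod_cast h0)) _
  have hTpos : ∀ α ∈ DelSet d p, 0 < T α := by
    intro α hα
    have hco : p.coeff α ≠ 0 :=
      MvPolynomial.mem_support_iff.mp (mem_pfilter.mp (mem_pfilter.mp hα).1).1
    exact hde.pow_pos (div_ne_zero hco (ne_of_gt hd0))
  have hTleW : ∀ α ∈ DelTot2 d gext, T α ≤ (w α / d) ^ d := by
    intro α hα
    calc T α = |p.coeff α / d| ^ d := (hde.pow_abs _).symm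
    _ ≤ (w α / d) ^ d := by
        refine pow_le_pow_left₀ (abs_nonneg _) ?_ d
        rw [abs_div, abs_of_pos hd0]
        exact (div_le_div_iff_of_pos_right hd0).mpr (habs α hα)
  have hTleQ : ∀ α ∈ DelSet d p, adeg α = d → T α ≤ Q α := fun α hα hdeg =>
    le_trans (hTleW α (hsubset hα)) (hprod α (hsubset hα) hdeg)
  set c : (Fin n →₀ ℕ) → ℝ := fun α => (T α / Q α) ^ ((d:ℝ)⁻¹) with hcdef
  have hcpos : ∀ α ∈ DelSet d p, 0 < c α := fun α hα =>
    Real.rpow_pos_of_pos (div_pos (hTpos α hα) (hQpos α (hsubset hα))) _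
  have hcle1 : ∀ α ∈ DelSet d p, adeg α = d → c α ≤ 1 := fun α hα hdeg =>
    Real.rpow_le_one (le_of_lt (div_pos (hTpos α hα) (hQpos α (hsubset hα))))
      ((div_le_one (hQpos α (hsubset hα))).mpr (hTleQ α hα hdeg))
      (inv_nonneg.mpr hd0.le)
  have hcd : ∀ α ∈ DelSet d p, c α ^ d = T α / Q α := by
    intro α hα
    have hx : (0:ℝ) ≤ T α / Q α := le_of_lt (div_pos (hTpos α hα) (hQpos α (hsubset hα)))
    rw [hcdef]
    rw [← Real.rpow_natCast ((T α / Q α) ^ ((d:ℝ)⁻¹)) d, ← Real.rpow_mul hx,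
      inv_mul_cancel₀ (ne_of_gt hd0), Real.rpow_one]
  set z' : (Fin n →₀ ℕ) → Fin n → ℝ :=
    fun α i => if adeg α = d ∧ α ∈ DelSet d p then c α * z α i else z α i with hz'def
  have hfe : LwFeas d p z' := by
    refine ⟨?_, ?_, ?_⟩
    · intro α hα i
      by_cases hcond : adeg α = d ∧ α ∈ DelSet d p
      · simp only [hz'def, if_pos hcond]
        obtain ⟨h1, h2⟩ := hz α (hsubset hα) i
        have hcp := hcpos α hcond.2
        refine ⟨mul_nonneg hcp.le h1, ?_⟩
        constructor
        · intro h
          rcases mul_eq_zero.mp h with h | h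
          · exact absurd h hcp.ne'
          · exact h2.mp h
        · intro h
          rw [h2.mpr h, mul_zero]
      · simp only [hz'def, if_neg hcond]
        exact hz α (hsubset hα) i
    · intro i
      calc ∑ α ∈ DelSet d p, z' α i ≤ ∑ α ∈ DelSet d p, z α i := by
            refine Finset.sum_le_sum fun α hα => ?_
            by_cases hcond : adeg α = d ∧ α ∈ DelSet d p
            · simp only [hz'def, if_pos hcond]
              exact mul_le_of_le_one_left (hz α (hsubset hα) i).1
                (hcle1 α hcond.2 hcond.1)
            · simp only [hz'def, if_neg hcond]
              exact le_refl _
      _ ≤ ∑ α ∈ DelTot2 d gext, z α i :=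
            Finset.sum_le_sum_of_subset_of_nonneg hsubset
              (fun α hα _ => (hz α hα i).1)
      _ ≤ (Hpoly gext A mu).coeff (Finsupp.single i d) := hsum i
      _ = p.coeff (Finsupp.single i d) := by rw [hP]
    · intro α hα hdeg
      have hcond : adeg α = d ∧ α ∈ DelSet d p := ⟨hdeg, hα⟩
      have hQne : Q α ≠ 0 := ne_of_gt (hQpos α (hsubset hα))
      calc ∏ i, (z' α i / (α i : ℝ)) ^ (α i)
          = ∏ i, (c α * z α i / (α i : ℝ)) ^ (α i) := by
            refine Finset.prod_congr rfl fun i _ => ?_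
            simp only [hz'def, if_pos hcond]
      _ = ∏ i, (c α) ^ (α i) * (z α i / (α i : ℝ)) ^ (α i) := by
            refine Finset.prod_congr rfl fun i _ => ?_
            rw [mul_div_assoc, mul_pow]
      _ = (∏ i, (c α) ^ (α i)) * Q α := Finset.prod_mul_distrib
      _ = (c α) ^ (∑ i, α i) * Q α := by rw [Finset.prod_pow_eq_pow_sum]
      _ = (c α) ^ d * Q α := by rw [show (∑ i, α i) = adeg α from rfl, hdeg]
      _ = (T α / Q α) * Q α := by rw [hcd α hα]
      _ = T α := div_mul_cancel₀ _ hQne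
  have hrho : lwRho d p ≤ ((lwObj d p z' : ℝ) : EReal) := sInf_le ⟨z', hfe, rfl⟩
  set S2 : ℝ := ∑ α ∈ pfilter (DelTot2 d gext) (fun α => adeg α < d),
    ((d : ℝ) - (adeg α : ℝ)) *
      (((w α / (d : ℝ)) ^ d * ∏ i, ((α i : ℝ) / z α i) ^ (α i)) ^
        ((1 : ℝ) / ((d : ℝ) - (adeg α : ℝ)))) with hS2
  have hObjle : lwObj d p z' ≤ S2 := by
    rw [hS2]
    unfold lwObj
    have hsub2 : pfilter (DelSet d p) (fun α => adeg α < d) ⊆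
        pfilter (DelTot2 d gext) (fun α => adeg α < d) := by
      intro α hα
      obtain ⟨h1, h2⟩ := mem_pfilter.mp hα
      exact mem_pfilter.mpr ⟨hsubset h1, h2⟩
    refine le_trans (Finset.sum_le_sum ?_) (Finset.sum_le_sum_of_subset_of_nonneg hsub2 ?_)
    · intro α hα
      obtain ⟨hαD, hαlt⟩ := mem_pfilter.mp hα
      have hαT := hsubset hαD
      have hdpos : (0:ℝ) < (d:ℝ) - adeg α := by
        have : (adeg α : ℝ) < d := by exact_mod_cast hαlt
        linarith
      have hcnd : ¬(adeg α = d ∧ α ∈ DelSet d p) := by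
        rintro ⟨h, -⟩
        omega
      simp only [hz'def, if_neg hcnd]
      have hQ'nonneg : 0 ≤ ∏ i, ((α i : ℝ) / z α i) ^ (α i) :=
        Finset.prod_nonneg fun i _ =>
          pow_nonneg (div_nonneg (Nat.cast_nonneg _) (hz α hαT i).1) _
      have hWT : (p.coeff α / (d:ℝ)) ^ d ≤ (w α / (d:ℝ)) ^ d := by
        have := hTleW α hαT
        rw [hTdef] at this
        exact this
      refine mul_le_mul_of_nonneg_left ?_ hdpos.le
      exact Real.rpow_le_rpow (mul_nonneg (hde.pow_nonneg _) hQ'nonneg)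
        (mul_le_mul_of_nonneg_right hWT hQ'nonneg) (by positivity)
    · intro α hα _
      obtain ⟨hαT, hαlt⟩ := mem_pfilter.mp hα
      have hdpos : (0:ℝ) < (d:ℝ) - adeg α := by
        have : (adeg α : ℝ) < d := by exact_mod_cast hαlt
        linarith
      have hQ'nonneg : 0 ≤ ∏ i, ((α i : ℝ) / z α i) ^ (α i) :=
        Finset.prod_nonneg fun i _ =>
          pow_nonneg (div_nonneg (Nat.cast_nonneg _) (hz α hαT i).1) _
      exact mul_nonneg hdpos.le
        (Real.rpow_nonneg (mul_nonneg (hde.pow_nonneg _) hQ'nonneg) _)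
  have heval : -(eval (0 : Fin n → ℝ) (hpoly gext A 0)) -
      (∑ j : Fin m, mu j * max (eval (0 : Fin n → ℝ) (hpoly gext A j.succ)) 0) ≤
      eval (0 : Fin n → ℝ) p := by
    have hev : eval (0 : Fin n → ℝ) p =
        -(∑ k, muExt mu k * eval (0 : Fin n → ℝ) (hpoly gext A k)) := by
      rw [← hP]
      simp [Hpoly, map_neg, map_sum, map_mul, eval_C]
    rw [hev, Fin.sum_univ_succ]
    rw [show muExt mu 0 = 1 from rfl, one_mul]
    simp only [show ∀ j : Fin m, muExt mu j.succ = mu j from fun j => rfl]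
    have hle : ∑ j : Fin m, mu j * eval (0 : Fin n → ℝ) (hpoly gext A j.succ) ≤
        ∑ j : Fin m, mu j * max (eval (0 : Fin n → ℝ) (hpoly gext A j.succ)) 0 :=
      Finset.sum_le_sum fun j _ =>
        mul_le_mul_of_nonneg_left (le_max_left _ _) (hmu j).le
    linarith
  have hsplit : lw2Obj d gext A z w mu =
      (∑ j : Fin m, mu j * max (eval (0 : Fin n → ℝ) (hpoly gext A j.succ)) 0) + S2 := rfl
  have hreal : -(eval (0 : Fin n → ℝ) (hpoly gext A 0)) - lw2Obj d gext A z w mu ≤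
      eval (0 : Fin n → ℝ) p - lwObj d p z' := by
    rw [hsplit]
    linarith
  calc ((-(eval (0 : Fin n → ℝ) (hpoly gext A 0)) - lw2Obj d gext A z w mu : ℝ) : EReal)
      ≤ ((eval (0 : Fin n → ℝ) p - lwObj d p z' : ℝ) : EReal) := by exact_mod_cast hreal
  _ = ((eval (0 : Fin n → ℝ) p : ℝ) : EReal) - ((lwObj d p z' : ℝ) : EReal) :=
      EReal.coe_sub _ _
  _ ≤ ((eval (0 : Fin n → ℝ) p : ℝ) : EReal) - lwRho d p :=
      EReal.sub_le_sub (le_refl _) hrho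
  _ = lwGp d p := rfl
/-- Theorem (change of variables): under the sign hypotheses on `A` and on the `(h_k)_{d,i}`,
every feasible point of (lw2) yields `λ ∈ [0,∞)^m` with `−h₀(0) − t(z,w,μ) ≤ G(λ)_gp`;
consequently `f^A_{gp,g} ≤ s(f,g)`. -/
theorem stmt5 {n m : ℕ} (hn : 1 ≤ n) (d : ℕ)
    (f : MvPolynomial (Fin n) ℝ) (g : Fin m → MvPolynomial (Fin n) ℝ)
    (hd2 : 2 ≤ d) (hde : Even d) (hdf : f.totalDegree ≤ d)
    (hdg : ∀ j, (g j).totalDegree ≤ d)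
    (hdLeast : ∀ d' : ℕ, Even d' → 2 ≤ d' → f.totalDegree ≤ d' →
      (∀ j, (g j).totalDegree ≤ d') → d ≤ d')
    (gext : Fin (m+1) → MvPolynomial (Fin n) ℝ) (hgext : gext = Fin.cons (-f) g)
    (hO : ∀ j, OmegaSet d (-(gext j)) = DelSet d (-(gext j)))
    (A : Fin (m+1) → Fin (m+1) → ℝ) (hA00 : A 0 0 = 1) (hA0 : ∀ k, k ≠ 0 → A 0 k = 0)
    (hArows : ∀ j : Fin (m+1), j ≠ 0 →
      (∃! k, 0 < A j k) ∨ (∀ k, 0 ≤ A j k))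
    (hneg : ∀ i : Fin n, ∃! k : Fin (m+1),
      (hpoly gext A k).coeff (Finsupp.single i d) < 0) :
    (∀ z w mu, Lw2Feas d gext A z w mu →
      (∀ j : Fin m, 0 ≤ ∑ k, A j.succ k * muExt mu k) ∧
      ((( -(eval (0 : Fin n → ℝ) (hpoly gext A 0)) - lw2Obj d gext A z w mu : ℝ) : EReal) ≤
        lwGp d (polyG f g (fun j => ∑ k, A j.succ k * muExt mu k)))) ∧
    fAgp d gext A ≤ sBound d f g := by
  classical
  constructor
  · intro z w mu hfeas
    exact main_core d f g hd2 hde gext hgext hO A hA00 hA0 z w mu hfeas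
  · unfold fAgp rhoA
    have himg : ((fun t : ((Fin n →₀ ℕ) → Fin n → ℝ) × ((Fin n →₀ ℕ) → ℝ) × (Fin m → ℝ) =>
          ((lw2Obj d gext A t.1 t.2.1 t.2.2 : ℝ) : EReal)) ''
        {t | Lw2Feas d gext A t.1 t.2.1 t.2.2}) =
        (fun x : ℝ => (x : EReal)) ''
          ((fun t : ((Fin n →₀ ℕ) → Fin n → ℝ) × ((Fin n →₀ ℕ) → ℝ) × (Fin m → ℝ) =>
            lw2Obj d gext A t.1 t.2.1 t.2.2) '' {t | Lw2Feas d gext A t.1 t.2.1 t.2.2}) := by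
      rw [← Set.image_comp]
      rfl
    rw [himg]
    refine aux_sub_sInf_le _ _ _ ?_
    rintro x ⟨t, ht, rfl⟩
    obtain ⟨hlam, hle⟩ :=
      main_core d f g hd2 hde gext hgext hO A hA00 hA0 t.1 t.2.1 t.2.2 ht
    exact le_trans hle (le_sSup ⟨_, hlam, rfl⟩)
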